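/- arXiv:0803.3693 — 3 statements merged into one kernel-verified Lean document; each statement's English description precedes it below -/
import Mathlib

section
/- Let (A_x)_{x∈S} be a family of subsets of {0,…,m−1} indexed by a finite set S of size n, and let M be the n×m 0-1 incidence matrix with M_{i,j}=1 iff j ∈ A_{x_i}. Let F be any field. If the 1-entries of M can be replaced by elements of F so that the resulting matrix M' has full row rank over F, then there exists an injective map σ : {1,…,n} → {0,…,m−1} with σ(i) ∈ A_{x_i} for all i. -/
theorem stmt_4 {F : Type} [Field F] (n m : ℕ) (A : Fin n → Finset (Fin m))
    (M' : Matrix (Fin n) (Fin m) F)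
    (hsupp : ∀ i j, j ∉ A i → M' i j = 0)
    (hrank : M'.rank = n) :
    ∃ σ : Fin n → Fin m, Function.Injective σ ∧ ∀ i : Fin n, σ i ∈ A i := by
  classical
  -- rows of M' are linearly independent
  have hli : LinearIndependent F (fun i : Fin n => M' i) := by
    rw [linearIndependent_iff_card_eq_finrank_span]
    rw [Set.finrank, Fintype.card_fin]
    have := Matrix.rank_eq_finrank_span_row M'
    rw [hrank] at this
    exact this
  -- Hall's condition
  rw [← Finset.all_card_le_biUnion_card_iff_exists_injective]
  intro s
  set T := s.biUnion A with hT
  have hlis : LinearIndependent F (fun i : s => M' i) :=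
    hli.comp (Subtype.val : s → Fin n) Subtype.val_injective
  -- restriction map to columns in T
  let π : (Fin m → F) →ₗ[F] (↥T → F) := LinearMap.funLeft F F Subtype.val
  have hli' : LinearIndependent F (fun i : s => π (M' i)) := by
    rw [Fintype.linearIndependent_iff]
    intro c hc
    have hfull : ∑ i : s, c i • M' (i : Fin n) = 0 := by
      funext j
      simp only [Finset.sum_apply, Pi.smul_apply, smul_eq_mul, Pi.zero_apply]
      by_cases hj : j ∈ T
      · have := congrFun hc ⟨j, hj⟩
        simpa [π, LinearMap.funLeft, Finset.sum_apply] using this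
      · apply Finset.sum_eq_zero
        intro i _
        have : M' i j = 0 := by
          apply hsupp
          intro hij
          exact hj (Finset.mem_biUnion.mpr ⟨i, i.2, hij⟩)
        simp [this]
    exact Fintype.linearIndependent_iff.mp hlis _ hfull
  have hcard := hli'.fintype_card_le_finrank
  simpa [Module.finrank_pi] using hcard
end

section
/- Let (A_x)_{x∈S} be a set system over {0,…,m−1}, |S| = n, admitting an injective choice function σ with σ(i) ∈ A_{x_i}, and suppose each A_{x_i} has at most k elements. Let F be a finite field. If the nonzero entries of the incidence matrix are replaced by independent uniformly random elements of F, then the resulting matrix M' has full row rank over F with probability at least 1 − n/|F|. -/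
open scoped Classical
open Matrix

section CoreSZ
variable {F : Type} [Field F] [Fintype F]


noncomputable def resEquiv {ι κ F : Type} (u : κ → ι) (hu : Function.Injective u)
    (p : (κ → F) → Prop) :
    {f : ι → F // p (fun k => f (u k))} ≃
      {g : κ → F // p g} × ({i : ι // ¬ ∃ k, u k = i} → F) where
  toFun f := (⟨fun k => f.1 (u k), f.2⟩, fun i => f.1 i.1)
  invFun gh := ⟨fun i => if h : ∃ k, u k = i then gh.1.1 h.choose else gh.2 ⟨i, h⟩, by
    have : (fun k => if h : ∃ k', u k' = u k then gh.1.1 h.choose else gh.2 ⟨u k, h⟩) = gh.1.1 := by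
      funext k
      rw [dif_pos ⟨k, rfl⟩]
      exact congrArg gh.1.1 (hu (⟨k, rfl⟩ : ∃ k', u k' = u k).choose_spec)
    rw [this]; exact gh.1.2⟩
  left_inv f := by
    ext i
    by_cases h : ∃ k, u k = i
    · simp only [dif_pos h]
      exact congrArg f.1 h.choose_spec
    · simp [dif_neg h]
  right_inv gh := by
    ext k
    · simp only
      rw [dif_pos ⟨k, rfl⟩]
      exact congrArg gh.1.1 (hu (⟨k, rfl⟩ : ∃ k', u k' = u k).choose_spec)
    · exact dif_neg k.2

lemma count_comp {ι κ F : Type} [Fintype ι] [Fintype κ] [DecidableEq ι] [DecidableEq κ] [Fintype F]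
    (u : κ → ι) (hu : Function.Injective u) (p : (κ → F) → Prop) :
    (Finset.univ.filter (fun f : ι → F => p (fun k => f (u k)))).card * Fintype.card (κ → F)
      = (Finset.univ.filter p).card * Fintype.card (ι → F) := by
  have h1 : Fintype.card {f : ι → F // p (fun k => f (u k))}
      = Fintype.card {g : κ → F // p g}
        * Fintype.card ({i : ι // ¬ ∃ k, u k = i} → F) := by
    rw [Fintype.card_congr (resEquiv u hu p), Fintype.card_prod]
  have h2 : Fintype.card (ι → F)
      = Fintype.card (κ → F) * Fintype.card ({i : ι // ¬ ∃ k, u k = i} → F) := by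
    have e1 := Fintype.card_congr (resEquiv u hu (fun _ : κ → F => True))
    rw [Fintype.card_prod] at e1
    have e2 : Fintype.card {f : ι → F // True} = Fintype.card (ι → F) :=
      Fintype.card_congr (Equiv.subtypeUnivEquiv (fun _ => trivial))
    have e3 : Fintype.card {g : κ → F // True} = Fintype.card (κ → F) :=
      Fintype.card_congr (Equiv.subtypeUnivEquiv (fun _ => trivial))
    rw [e2, e3] at e1
    exact e1
  rw [← Fintype.card_subtype, ← Fintype.card_subtype, h1, h2]
  ring

lemma card_filter_eval_eq {ι F : Type} [Fintype ι] [DecidableEq ι] [Fintype F] (a : ι) (c : F) :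
    (Finset.univ.filter (fun x : ι → F => x a = c)).card * Fintype.card F
      = Fintype.card (ι → F) := by
  have e : {x : ι → F // x a = c} × F ≃ (ι → F) := by
    refine ⟨fun xt => Function.update xt.1.1 a xt.2,
      fun y => (⟨Function.update y a c, Function.update_self a c y⟩, y a), ?_, ?_⟩
    · rintro ⟨⟨x, hx⟩, t⟩
      ext k
      · simp only
        rw [Function.update_idem, ← hx, Function.update_eq_self]
      · simp
    · intro y
      simp [Function.update_idem]
  rw [← Fintype.card_subtype, ← Fintype.card_prod, Fintype.card_congr e]

-- key linearity lemma for the determinant in the (last,last) entry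
lemma det_update_last {s : ℕ} (mask : Fin (s+1) → Fin (s+1) → Prop)
    (hdiag : ∀ i, mask i i) (x : Fin (s+1) × Fin (s+1) → F) (t : F) :
    (Matrix.of fun i j => if mask i j then
        Function.update x (Fin.last s, Fin.last s) t (i, j) else 0).det
      = (Matrix.of fun i j => if mask i j then
          Function.update x (Fin.last s, Fin.last s) (0 : F) (i, j) else 0).det
        + t * (Matrix.of fun i j : Fin s =>
            if mask i.castSucc j.castSucc then x (i.castSucc, j.castSucc) else 0).det := by
  set p0 : Fin (s+1) × Fin (s+1) := (Fin.last s, Fin.last s) with hp0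
  have hent : ∀ (a : F) (i j : Fin (s+1)), (i, j) ≠ p0 →
      (if mask i j then Function.update x p0 a (i, j) else 0)
        = (if mask i j then x (i, j) else 0) := by
    intro a i j hij
    by_cases h : mask i j
    · rw [if_pos h, if_pos h, Function.update_of_ne hij]
    · rw [if_neg h, if_neg h]
  have hminor : ∀ (a : F) (j : Fin (s+1)),
      ((Matrix.of fun i j => if mask i j then Function.update x p0 a (i, j) else 0).submatrix
          (Fin.last s).succAbove j.succAbove)
        = ((Matrix.of fun i j => if mask i j then x (i, j) else 0).submatrix
            (Fin.last s).succAbove j.succAbove) := by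
    intro a j
    ext i' j'
    simp only [Matrix.submatrix_apply, Matrix.of_apply]
    apply hent
    rw [Fin.succAbove_last]
    intro h
    exact (Fin.castSucc_lt_last i').ne (congrArg Prod.fst h)
  rw [Matrix.det_succ_row _ (Fin.last s), Matrix.det_succ_row _ (Fin.last s)]
  rw [Fin.sum_univ_castSucc, Fin.sum_univ_castSucc]
  have hrest : ∀ (a : F) (j : Fin s),
      (-1 : F) ^ ((Fin.last s : ℕ) + (j.castSucc : ℕ))
          * (Matrix.of fun i j => if mask i j then Function.update x p0 a (i, j) else 0)
              (Fin.last s) j.castSucc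
          * ((Matrix.of fun i j => if mask i j then Function.update x p0 a (i, j) else 0).submatrix
              (Fin.last s).succAbove j.castSucc.succAbove).det
        = (-1 : F) ^ ((Fin.last s : ℕ) + (j.castSucc : ℕ))
          * (Matrix.of fun i j => if mask i j then x (i, j) else 0)
              (Fin.last s) j.castSucc
          * ((Matrix.of fun i j => if mask i j then x (i, j) else 0).submatrix
              (Fin.last s).succAbove j.castSucc.succAbove).det := by
    intro a j
    rw [hminor]
    congr 1
    simp only [Matrix.of_apply]
    congr 1
    apply hent
    intro h
    exact (Fin.castSucc_lt_last j).ne (congrArg Prod.snd h)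
  rw [Finset.sum_congr rfl (fun j _ => hrest t j),
    Finset.sum_congr rfl (fun j _ => hrest 0 j)]
  -- now handle the last terms
  have hlastentry : ∀ a : F,
      (Matrix.of fun i j => if mask i j then Function.update x p0 a (i, j) else 0)
        (Fin.last s) (Fin.last s) = a := by
    intro a
    simp only [Matrix.of_apply, if_pos (hdiag (Fin.last s))]
    exact Function.update_self p0 a x
  have hminorlast : ∀ a : F,
      ((Matrix.of fun i j => if mask i j then Function.update x p0 a (i, j) else 0).submatrix
          (Fin.last s).succAbove (Fin.last s).succAbove)
        = (Matrix.of fun i j : Fin s =>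
            if mask i.castSucc j.castSucc then x (i.castSucc, j.castSucc) else 0) := by
    intro a
    rw [hminor]
    ext i' j'
    simp [Fin.succAbove_last]
  have hsign : (-1 : F) ^ ((Fin.last s : ℕ) + (Fin.last s : ℕ)) = 1 :=
    Even.neg_one_pow ⟨s, rfl⟩
  rw [hlastentry, hlastentry, hminorlast, hminorlast, hsign]
  ring


lemma core : ∀ (s : ℕ) (mask : Fin s → Fin s → Prop), (∀ i, mask i i) →
    (Finset.univ.filter (fun x : Fin s × Fin s → F =>
        (Matrix.of fun i j => if mask i j then x (i, j) else 0).det = 0)).card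
      * Fintype.card F
      ≤ s * Fintype.card (Fin s × Fin s → F) := by
  intro s
  induction s with
  | zero =>
    intro mask _
    have : (Finset.univ.filter (fun x : Fin 0 × Fin 0 → F =>
        (Matrix.of fun i j => if mask i j then x (i, j) else 0).det = 0)) = ∅ := by
      apply Finset.filter_false_of_mem
      intro x _
      rw [Matrix.det_fin_zero]
      exact one_ne_zero
    simp [this]
  | succ s ih =>
    intro mask hdiag
    set p0 : Fin (s+1) × Fin (s+1) := (Fin.last s, Fin.last s) with hp0
    set q := Fintype.card F with hq
    set X := Fintype.card (Fin (s+1) × Fin (s+1) → F) with hX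
    -- the cofactor
    set C : (Fin (s+1) × Fin (s+1) → F) → F := fun x =>
      (Matrix.of fun i j : Fin s =>
          if mask i.castSucc j.castSucc then x (i.castSucc, j.castSucc) else 0).det with hC
    set D : (Fin (s+1) × Fin (s+1) → F) → F := fun x =>
      (Matrix.of fun i j => if mask i j then x (i, j) else 0).det with hD
    have hkey : ∀ (x : Fin (s+1) × Fin (s+1) → F),
        D x = D (Function.update x p0 0) + x p0 * C x := by
      intro x
      have := det_update_last mask hdiag x (x p0)
      rwa [Function.update_eq_self] at this
    have hCupd : ∀ (x y : Fin (s+1) × Fin (s+1) → F),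
        (∀ k, k ≠ p0 → x k = y k) → C x = C y := by
      intro x y h
      simp only [hC]
      congr 1
      ext i j
      simp only [Matrix.of_apply]
      by_cases hm : mask i.castSucc j.castSucc
      · rw [if_pos hm, if_pos hm]
        apply h
        intro hcontra
        exact (Fin.castSucc_lt_last i).ne (congrArg Prod.fst hcontra)
      · rw [if_neg hm, if_neg hm]
    -- split
    have hsubset : (Finset.univ.filter (fun x => D x = 0)) ⊆
        (Finset.univ.filter (fun x => C x = 0))
          ∪ (Finset.univ.filter (fun x => C x ≠ 0 ∧ D x = 0)) := by
      intro x hx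
      simp only [Finset.mem_filter, Finset.mem_univ, true_and] at hx
      by_cases hc : C x = 0
      · exact Finset.mem_union_left _ (by simp [hc])
      · exact Finset.mem_union_right _ (by simp [hc, hx])
    have hcard : (Finset.univ.filter (fun x => D x = 0)).card ≤
        (Finset.univ.filter (fun x => C x = 0)).card
          + (Finset.univ.filter (fun x => C x ≠ 0 ∧ D x = 0)).card :=
      le_trans (Finset.card_le_card hsubset) (Finset.card_union_le _ _)
    -- bound the first set using the inductive hypothesis
    have h1 : (Finset.univ.filter (fun x => C x = 0)).card * q ≤ s * X := by
      set u' : Fin s × Fin s → Fin (s+1) × Fin (s+1) :=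
        fun k => (k.1.castSucc, k.2.castSucc) with hu'
      have hu'inj : Function.Injective u' := by
        intro a b hab
        have h1 := congrArg Prod.fst hab
        have h2 := congrArg Prod.snd hab
        simp only [hu'] at h1 h2
        exact Prod.ext (Fin.castSucc_injective _ h1) (Fin.castSucc_injective _ h2)
      set p : (Fin s × Fin s → F) → Prop := fun y =>
        (Matrix.of fun i j : Fin s =>
          if mask i.castSucc j.castSucc then y (i, j) else 0).det = 0 with hp
      have heq : (Finset.univ.filter (fun x => C x = 0))
          = (Finset.univ.filter (fun x : Fin (s+1) × Fin (s+1) → F =>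
              p (fun k => x (u' k)))) := by
        apply Finset.filter_congr
        intro x _
        simp only [hC, hp, hu']
      have hcc := count_comp u' hu'inj p
      have hih := ih (fun i j => mask i.castSucc j.castSucc) (fun i => hdiag i.castSucc)
      -- hih : (filter p).card * q ≤ s * card (Fin s × Fin s → F)
      rw [heq]
      have hpos : 0 < Fintype.card (Fin s × Fin s → F) := Fintype.card_pos
      set K := Fintype.card (Fin s × Fin s → F) with hK
      set A := (Finset.univ.filter (fun x : Fin (s+1) × Fin (s+1) → F =>
          p (fun k => x (u' k)))).card with hA
      set B := (Finset.univ.filter p).card with hB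
      apply Nat.le_of_mul_le_mul_right _ hpos
      calc A * q * K = A * K * q := by ring
        _ = B * X * q := by rw [hcc]
        _ = B * q * X := by ring
        _ ≤ s * K * X := Nat.mul_le_mul_right X hih
        _ = s * X * K := by ring
    -- bound the second set
    have h2 : (Finset.univ.filter (fun x => C x ≠ 0 ∧ D x = 0)).card * q ≤ X := by
      have hinj : Set.InjOn (fun x : Fin (s+1) × Fin (s+1) → F => Function.update x p0 0)
          ↑(Finset.univ.filter (fun x => C x ≠ 0 ∧ D x = 0)) := by
        intro x hx y hy hxy
        simp only [Finset.coe_filter, Set.mem_setOf_eq, Finset.mem_univ, true_and] at hx hy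
        simp only at hxy
        have hoff : ∀ k, k ≠ p0 → x k = y k := by
          intro k hk
          have := congrFun hxy k
          rwa [Function.update_of_ne hk, Function.update_of_ne hk] at this
        have hCxy : C x = C y := hCupd x y hoff
        have hdx := hkey x
        have hdy := hkey y
        rw [hx.2, hxy] at hdx
        rw [hy.2] at hdy
        have hmul : x p0 * C y = y p0 * C y := by
          linear_combination hdy - hdx - x p0 * hCxy
        have hp0eq : x p0 = y p0 := mul_right_cancel₀ hy.1 hmul
        funext k
        by_cases hk : k = p0
        · rw [hk]; exact hp0eq
        · exact hoff k hk
      have hmaps : ∀ x ∈ Finset.univ.filter (fun x => C x ≠ 0 ∧ D x = 0),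
          Function.update x p0 0 ∈ Finset.univ.filter
            (fun x : Fin (s+1) × Fin (s+1) → F => x p0 = 0) := by
        intro x _
        simp [Function.update_self]
      have := Finset.card_le_card_of_injOn _ hmaps hinj
      calc (Finset.univ.filter (fun x => C x ≠ 0 ∧ D x = 0)).card * q
          ≤ (Finset.univ.filter
              (fun x : Fin (s+1) × Fin (s+1) → F => x p0 = 0)).card * q :=
            Nat.mul_le_mul_right q this
        _ = X := card_filter_eval_eq p0 0
    calc (Finset.univ.filter (fun x => D x = 0)).card * q
        ≤ ((Finset.univ.filter (fun x => C x = 0)).card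
            + (Finset.univ.filter (fun x => C x ≠ 0 ∧ D x = 0)).card) * q :=
          Nat.mul_le_mul_right q hcard
      _ = (Finset.univ.filter (fun x => C x = 0)).card * q
            + (Finset.univ.filter (fun x => C x ≠ 0 ∧ D x = 0)).card * q := by ring
      _ ≤ s * X + X := Nat.add_le_add h1 h2
      _ = (s + 1) * X := by ring


end CoreSZ

lemma rank_submatrix_rows_le {l m n R : Type} [Fintype l] [Fintype m] [Fintype n]
    [Field R] (B : Matrix m n R) (f : l → m) :
    (B.submatrix f id).rank ≤ B.rank := by
  have h : (B.submatrix f id).mulVecLin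
      = (LinearMap.funLeft R R f).comp B.mulVecLin := by
    have := Matrix.mulVecLin_submatrix f (Equiv.refl n) B
    exact this
  rw [Matrix.rank, Matrix.rank, h, LinearMap.range_comp]
  exact Submodule.finrank_map_le _ _

theorem stmt_6 {F : Type} [Field F] [Fintype F] (n m k : ℕ)
    (A : Fin n → Finset (Fin m)) (hk : ∀ i, (A i).card ≤ k)
    (σ : Fin n → Fin m) (hσ : Function.Injective σ) (hmem : ∀ i, σ i ∈ A i) :
    (1 : ℝ) - n / Fintype.card F ≤
      ((Finset.univ.filter (fun g : Fin n × Fin m → F =>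
          (Matrix.of fun i j => if j ∈ A i then g (i, j) else 0).rank = n)).card : ℝ)
        / Fintype.card (Fin n × Fin m → F) := by
  set q := Fintype.card F with hq
  set T := Fintype.card (Fin n × Fin m → F) with hT
  set u : Fin n × Fin n → Fin n × Fin m := fun k' => (k'.1, σ k'.2) with hu
  have huinj : Function.Injective u := by
    intro a b hab
    have h1 := congrArg Prod.fst hab
    have h2 := congrArg Prod.snd hab
    simp only [hu] at h1 h2
    exact Prod.ext h1 (hσ h2)
  set p : (Fin n × Fin n → F) → Prop := fun y =>
    (Matrix.of fun i j : Fin n =>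
      @ite F (σ j ∈ A i) (Classical.propDecidable (σ j ∈ A i)) (y (i, j)) 0).det = 0 with hp
  -- counting bound on the bad set
  have hcc := count_comp u huinj p
  set K := Fintype.card (Fin n × Fin n → F) with hK
  have hcore : (Finset.univ.filter p).card * q ≤ n * K :=
    core (F := F) n (fun i j => σ j ∈ A i) hmem
  set bad := (Finset.univ.filter (fun g : Fin n × Fin m → F =>
      p (fun k' => g (u k')))).card with hbad
  have hKpos : 0 < K := Fintype.card_pos
  have hbadq : bad * q ≤ n * T := by
    apply Nat.le_of_mul_le_mul_right _ hKpos
    calc bad * q * K = bad * K * q := by ring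
      _ = (Finset.univ.filter p).card * T * q := by rw [hcc]
      _ = (Finset.univ.filter p).card * q * T := by ring
      _ ≤ n * K * T := Nat.mul_le_mul_right T hcore
      _ = n * T * K := by ring
  -- the good set contains the complement of the bad set
  have hsub : (Finset.univ.filter (fun g : Fin n × Fin m → F =>
        ¬ p (fun k' => g (u k'))))
      ⊆ (Finset.univ.filter (fun g : Fin n × Fin m → F =>
          (Matrix.of fun i j => if j ∈ A i then g (i, j) else 0).rank = n)) := by
    intro g hg
    simp only [Finset.mem_filter, Finset.mem_univ, true_and] at hg ⊢
    set M : Matrix (Fin n) (Fin m) F :=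
      Matrix.of fun i j => if j ∈ A i then g (i, j) else 0 with hM
    set N : Matrix (Fin n) (Fin n) F :=
      Matrix.of (fun i j : Fin n =>
        @ite F (σ j ∈ A i) (Classical.propDecidable (σ j ∈ A i)) (g (i, σ j)) 0) with hN
    have hdet : N.det ≠ 0 := hg
    have hNunit : IsUnit N := (Matrix.isUnit_iff_isUnit_det N).2 hdet.isUnit
    have hNrank : N.rank = n := by
      rw [Matrix.rank_of_isUnit N hNunit, Fintype.card_fin]
    have hle : N.rank ≤ M.rank := by
      have h1 : N = M.submatrix id σ := by
        ext i j
        simp only [hN, hM, Matrix.submatrix_apply, Matrix.of_apply, id]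
        by_cases h : σ j ∈ A i
        · rw [if_pos h, if_pos h]
        · rw [if_neg h, if_neg h]
      rw [h1, ← Matrix.rank_transpose, Matrix.transpose_submatrix]
      calc (Mᵀ.submatrix σ id).rank ≤ Mᵀ.rank := rank_submatrix_rows_le Mᵀ σ
        _ = M.rank := Matrix.rank_transpose M
    have hub : M.rank ≤ n := by
      have := M.rank_le_card_height
      rwa [Fintype.card_fin] at this
    have h2 : n ≤ M.rank := by
      calc n = N.rank := hNrank.symm
        _ ≤ M.rank := hle
    exact le_antisymm hub h2
  -- cardinalities
  set good := (Finset.univ.filter (fun g : Fin n × Fin m → F =>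
      (Matrix.of fun i j => if j ∈ A i then g (i, j) else 0).rank = n)).card with hgood
  have hsplit : (Finset.univ.filter (fun g : Fin n × Fin m → F =>
        p (fun k' => g (u k')))).card
      + (Finset.univ.filter (fun g : Fin n × Fin m → F =>
        ¬ p (fun k' => g (u k')))).card
      = (Finset.univ : Finset (Fin n × Fin m → F)).card :=
    Finset.card_filter_add_card_filter_not _
  rw [Finset.card_univ] at hsplit
  have hTle : T ≤ bad + good := by
    have h2 : (Finset.univ.filter (fun g : Fin n × Fin m → F =>
        ¬ p (fun k' => g (u k')))).card ≤ good := Finset.card_le_card hsub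
    have e1 : bad + (Finset.univ.filter (fun g : Fin n × Fin m → F =>
        ¬ p (fun k' => g (u k')))).card = T := by
      rw [hT, hbad]; exact hsplit
    calc T = bad + (Finset.univ.filter (fun g : Fin n × Fin m → F =>
          ¬ p (fun k' => g (u k')))).card := e1.symm
      _ ≤ bad + good := Nat.add_le_add_left h2 bad
  -- real arithmetic
  have hq0 : (0 : ℝ) < q := by exact_mod_cast (Fintype.card_pos : 0 < q)
  have hT0 : (0 : ℝ) < T := by exact_mod_cast (Fintype.card_pos : 0 < T)
  have hbadR : (bad : ℝ) / T ≤ n / q := by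
    rw [div_le_div_iff₀ hT0 hq0]
    exact_mod_cast hbadq
  have hTR : (T : ℝ) ≤ bad + good := by exact_mod_cast hTle
  calc (1 : ℝ) - n / q ≤ 1 - (bad : ℝ) / T := by linarith
    _ = ((T : ℝ) - bad) / T := by field_simp
    _ ≤ (good : ℝ) / T := by
        gcongr
        linarith
end

section
/- (Schwartz–Zippel) Let F be a finite field and p ∈ F[X_1,…,X_N] a nonzero polynomial of total degree d. If a_1,…,a_N are chosen independently and uniformly from F, then the probability that p(a_1,…,a_N) = 0 is at most d/|F|. -/
open scoped Classical

open Finset MvPolynomial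

lemma sz_key {F : Type} [Field F] [Fintype F] :
    ∀ (N : ℕ) (p : MvPolynomial (Fin N) F), p ≠ 0 →
      (Finset.univ.filter (fun a : Fin N → F => MvPolynomial.eval a p = 0)).card
        * Fintype.card F ≤ p.totalDegree * Fintype.card F ^ N := by
  intro N
  induction N with
  | zero =>
    intro p hp
    obtain ⟨c, rfl⟩ := MvPolynomial.C_surjective (Fin 0) p
    have hc : c ≠ 0 := fun h => hp (by simp [h])
    have : (Finset.univ.filter (fun a : Fin 0 → F => MvPolynomial.eval a (C c) = 0)) = ∅ := by
      apply Finset.filter_false_of_mem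
      intro a _
      simpa using hc
    simp only [this, Finset.card_empty, Nat.zero_mul]
    exact Nat.zero_le _
  | succ N ih =>
    intro p hp
    set q : Polynomial (MvPolynomial (Fin N) F) := MvPolynomial.finSuccEquiv F N p with hq
    have hq0 : q ≠ 0 := by
      simpa [hq] using (map_ne_zero_iff _ (MvPolynomial.finSuccEquiv F N).injective).2 hp
    set k : ℕ := q.natDegree with hk
    set pk : MvPolynomial (Fin N) F := q.coeff k with hpk
    have hpk0 : pk ≠ 0 := by
      simpa [hpk, hk] using Polynomial.leadingCoeff_ne_zero.2 hq0
    have hdeg : pk.totalDegree + k ≤ p.totalDegree := by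
      simpa [hpk, hq] using
        MvPolynomial.totalDegree_coeff_finSuccEquiv_add_le p k (by simpa [hpk, hq] using hpk0)
    -- fiberwise counting
    set R : (Fin N → F) → Finset F := fun s =>
      Finset.univ.filter (fun x : F => MvPolynomial.eval (Fin.cons x s) p = 0) with hR
    have hcount :
        (Finset.univ.filter (fun a : Fin (N + 1) → F => MvPolynomial.eval a p = 0)).card
          = ∑ s : Fin N → F, (R s).card := by
      rw [Finset.card_eq_sum_card_fiberwise
        (f := fun a : Fin (N + 1) → F => Fin.tail a) (t := Finset.univ)
        (fun a _ => Finset.mem_univ _)]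
      refine Finset.sum_congr rfl fun s _ => ?_
      refine Finset.card_bij (fun (a : Fin (N + 1) → F) _ => a 0) ?_ ?_ ?_
      · intro a ha
        simp only [Finset.mem_filter, Finset.mem_univ, true_and] at ha
        rw [hR]
        simp only [Finset.mem_filter, Finset.mem_univ, true_and]
        rw [← ha.2, Fin.cons_self_tail a]
        exact ha.1
      · intro a ha b hb hab
        simp only [Finset.mem_filter, Finset.mem_univ, true_and] at ha hb
        rw [← Fin.cons_self_tail a, ← Fin.cons_self_tail b, ha.2, hb.2]
        have hab' : a 0 = b 0 := hab
        rw [hab']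
      · intro x hx
        rw [hR] at hx
        simp only [Finset.mem_filter, Finset.mem_univ, true_and] at hx
        exact ⟨Fin.cons x s, by simp [hx, Fin.tail_cons], by simp⟩
    set S0 : Finset (Fin N → F) :=
      Finset.univ.filter (fun s => MvPolynomial.eval s pk = 0) with hS0
    have hbound1 : ∀ s ∉ S0, (R s).card ≤ k := by
      intro s hs
      rw [hS0] at hs
      simp only [Finset.mem_filter, Finset.mem_univ, true_and] at hs
      set qs : Polynomial F := q.map (MvPolynomial.eval s) with hqs
      have hqs0 : qs ≠ 0 := fun h => hs (by
        have := congrArg (fun r => Polynomial.coeff r k) h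
        simpa [hqs, Polynomial.coeff_map, hpk] using this)
      have hsub : R s ⊆ qs.roots.toFinset := by
        intro x hx
        rw [hR] at hx
        simp only [Finset.mem_filter, Finset.mem_univ, true_and] at hx
        rw [Multiset.mem_toFinset, Polynomial.mem_roots hqs0]
        rw [MvPolynomial.eval_eq_eval_mv_eval'] at hx
        exact hx
      calc (R s).card ≤ qs.roots.toFinset.card := Finset.card_le_card hsub
        _ ≤ Multiset.card qs.roots := qs.roots.toFinset_card_le
        _ ≤ qs.natDegree := qs.card_roots'
        _ ≤ k := by
              simpa [hqs, hk] using
                Polynomial.natDegree_map_le (f := MvPolynomial.eval s) (p := q)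
    have hbound2 : ∀ s, (R s).card ≤ Fintype.card F := fun s =>
      (Finset.card_filter_le _ _).trans_eq (Finset.card_univ)
    have hIH : S0.card * Fintype.card F ≤ pk.totalDegree * Fintype.card F ^ N := ih pk hpk0
    have hsum : ∑ s : Fin N → F, (R s).card
        ≤ S0.card * Fintype.card F + Fintype.card F ^ N * k := by
      rw [← Finset.sum_filter_add_sum_filter_not Finset.univ
        (fun s => MvPolynomial.eval s pk = 0)]
      gcongr
      · calc ∑ s ∈ S0, (R s).card ≤ ∑ _s ∈ S0, Fintype.card F :=
              Finset.sum_le_sum fun s _ => hbound2 s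
          _ = S0.card * Fintype.card F := by rw [Finset.sum_const, smul_eq_mul]
      · calc ∑ s ∈ Finset.univ.filter (fun s => ¬ MvPolynomial.eval s pk = 0), (R s).card
            ≤ ∑ _s ∈ Finset.univ.filter (fun s => ¬ MvPolynomial.eval s pk = 0), k :=
              Finset.sum_le_sum fun s hs => hbound1 s (by
                rw [hS0]; simp only [Finset.mem_filter, Finset.mem_univ, true_and] at hs ⊢
                exact hs)
          _ = (Finset.univ.filter (fun s => ¬ MvPolynomial.eval s pk = 0)).card * k := by
              rw [Finset.sum_const, smul_eq_mul]
          _ ≤ (Finset.univ : Finset (Fin N → F)).card * k :=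
              Nat.mul_le_mul_right k (Finset.card_le_card (Finset.filter_subset _ _))
          _ = Fintype.card F ^ N * k := by
              rw [Finset.card_univ, Fintype.card_fun]
              simp
    calc (Finset.univ.filter (fun a : Fin (N + 1) → F => MvPolynomial.eval a p = 0)).card
          * Fintype.card F
        = (∑ s : Fin N → F, (R s).card) * Fintype.card F := by rw [hcount]
      _ ≤ (S0.card * Fintype.card F + Fintype.card F ^ N * k) * Fintype.card F :=
          Nat.mul_le_mul_right _ hsum
      _ = S0.card * Fintype.card F * Fintype.card F
          + k * Fintype.card F ^ (N + 1) := by ring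
      _ ≤ pk.totalDegree * Fintype.card F ^ N * Fintype.card F
          + k * Fintype.card F ^ (N + 1) := by gcongr
      _ = (pk.totalDegree + k) * Fintype.card F ^ (N + 1) := by ring
      _ ≤ p.totalDegree * Fintype.card F ^ (N + 1) := by gcongr

theorem stmt_7 {F : Type} [Field F] [Fintype F] (N d : ℕ)
    (p : MvPolynomial (Fin N) F) (hp : p ≠ 0) (hd : p.totalDegree ≤ d) :
    ((Finset.univ.filter (fun a : Fin N → F => MvPolynomial.eval a p = 0)).card : ℝ)
      / (Fintype.card F : ℝ) ^ N ≤ d / Fintype.card F := by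
  have hF : (0 : ℝ) < Fintype.card F := by positivity
  have key := sz_key N p hp
  have key' : (Finset.univ.filter (fun a : Fin N → F => MvPolynomial.eval a p = 0)).card
      * Fintype.card F ≤ d * Fintype.card F ^ N :=
    key.trans (Nat.mul_le_mul_right _ hd)
  rw [div_le_div_iff₀ (by positivity) hF]
  have := (Nat.cast_le (α := ℝ)).2 key'
  push_cast at this
  linarith
end
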